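/- Let S be a set of positive integers and let n be a natural number. Then n · p_S(n) = Σ_{s ∈ S, s ≤ n} s · Σ_{k=1}^{⌊n/s⌋} p_S(n − s·k), where p_S denotes the number of partitions with all parts in S. -/
import Mathlib


open scoped Classical
open Finset

/-- `partitionsIn S n` is the number of partitions of `n` with all parts in `S`. -/
noncomputable def partitionsIn (S : Set ℕ) (n : ℕ) : ℕ :=
  Nat.card {p : n.Partition // ∀ a ∈ p.parts, a ∈ S}

lemma partitionsIn_eq (S : Set ℕ) (n : ℕ) :
    partitionsIn S n
      = ((univ : Finset n.Partition).filter (fun p => ∀ a ∈ p.parts, a ∈ S)).card := by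
  rw [partitionsIn, Nat.card_eq_fintype_card, Fintype.card_subtype]

theorem stmt_13 (S : Set ℕ) (hS : ∀ s ∈ S, 0 < s) (n : ℕ) :
    n * partitionsIn S n =
      ∑ s ∈ (Finset.Icc 1 n).filter (· ∈ S),
        s * ∑ k ∈ Finset.Icc 1 (n / s), partitionsIn S (n - s * k) := by
  classical
  simp only [partitionsIn_eq]
  set F := (Finset.Icc 1 n).filter (· ∈ S) with hF
  set T : (m : ℕ) → Finset m.Partition :=
    fun m => (univ : Finset m.Partition).filter (fun p => ∀ a ∈ p.parts, a ∈ S) with hT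
  have hmemT : ∀ {m : ℕ} (p : m.Partition), p ∈ T m ↔ ∀ a ∈ p.parts, a ∈ S := by
    intro m p; simp [hT]
  -- bound on count
  have hcount : ∀ (p : n.Partition) (s : ℕ), s * p.parts.count s ≤ n := by
    intro p s
    obtain ⟨u, hu⟩ := Multiset.le_iff_exists_add.1 (Multiset.filter_le (· = s) p.parts)
    have h1 : s * p.parts.count s ≤ p.parts.sum := by
      conv_rhs => rw [hu]
      rw [Multiset.sum_add, Multiset.filter_eq', Multiset.sum_replicate, smul_eq_mul,
        mul_comm]
      exact Nat.le_add_right _ _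
    rwa [p.parts_sum] at h1
  -- decompose the sum of parts
  have hdecomp : ∀ p ∈ T n, p.parts.sum = ∑ s ∈ F, s * p.parts.count s := by
    intro p hp
    have hsub : p.parts.toFinset ⊆ F := by
      intro a ha
      rw [Multiset.mem_toFinset] at ha
      have hpos := p.parts_pos ha
      have hle : a ≤ n := by
        have := Multiset.single_le_sum (fun x _ => Nat.zero_le x) a ha
        rw [p.parts_sum] at this; exact this
      simp only [hF, mem_filter, mem_Icc]
      exact ⟨⟨hpos, hle⟩, (hmemT p).1 hp a ha⟩
    have := Finset.sum_multiset_map_count p.parts (id : ℕ → ℕ)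
    rw [Multiset.map_id] at this
    rw [this, Finset.sum_subset hsub]
    · apply Finset.sum_congr rfl
      intro s _; simp [mul_comm]
    · intro s _ hs
      rw [Multiset.mem_toFinset] at hs
      simp [Multiset.count_eq_zero_of_notMem hs]
  calc n * (T n).card = ∑ p ∈ T n, p.parts.sum := by
        rw [Finset.sum_congr rfl (fun p hp => p.parts_sum), Finset.sum_const,
          smul_eq_mul, mul_comm]
    _ = ∑ p ∈ T n, ∑ s ∈ F, s * p.parts.count s := Finset.sum_congr rfl hdecomp
    _ = ∑ s ∈ F, ∑ p ∈ T n, s * p.parts.count s := Finset.sum_comm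
    _ = ∑ s ∈ F, s * ∑ k ∈ Finset.Icc 1 (n / s), (T (n - s * k)).card := by
        apply Finset.sum_congr rfl
        intro s hsF
        rw [← Finset.mul_sum]
        congr 1
        have hsS : s ∈ S := (Finset.mem_filter.1 hsF).2
        have hspos : 0 < s := hS s hsS
        -- layer cake
        have hlayer : ∀ p ∈ T n, p.parts.count s
            = ((Finset.Icc 1 (n / s)).filter (fun k => k ≤ p.parts.count s)).card := by
          intro p _
          have hcle : p.parts.count s ≤ n / s :=
            Nat.le_div_iff_mul_le hspos |>.2 (by rw [mul_comm]; exact hcount p s)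
          have : (Finset.Icc 1 (n / s)).filter (fun k => k ≤ p.parts.count s)
              = Finset.Icc 1 (p.parts.count s) := by
            ext k
            simp only [mem_filter, mem_Icc]
            constructor
            · rintro ⟨⟨h1, _⟩, h2⟩; exact ⟨h1, h2⟩
            · rintro ⟨h1, h2⟩; exact ⟨⟨h1, h2.trans hcle⟩, h2⟩
          rw [this, Nat.card_Icc]
          simp
        rw [Finset.sum_congr rfl hlayer]
        simp only [Finset.card_filter]
        rw [Finset.sum_comm]
        apply Finset.sum_congr rfl
        intro k hk
        rw [← Finset.card_filter]
        -- bijection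
        rw [mem_Icc] at hk
        have hskn : s * k ≤ n := le_trans (Nat.mul_le_mul_left s hk.2) (Nat.mul_div_le n s)
        refine Finset.card_bij'
          (fun p hp => (⟨p.parts - Multiset.replicate k s,
            fun {a} ha => p.parts_pos (Multiset.mem_of_le (Multiset.sub_le_self _ _) ha),
            by
              have hrep : Multiset.replicate k s ≤ p.parts :=
                Multiset.le_count_iff_replicate_le.1 (Finset.mem_filter.1 hp).2
              have hsum := congrArg Multiset.sum (tsub_add_cancel_of_le hrep)
              rw [Multiset.sum_add, Multiset.sum_replicate, p.parts_sum, smul_eq_mul,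
                mul_comm k s] at hsum
              omega⟩ : (n - s * k).Partition))
          (fun q hq => (⟨q.parts + Multiset.replicate k s,
            fun {a} ha => by
              rcases Multiset.mem_add.1 ha with h | h
              · exact q.parts_pos h
              · rw [Multiset.eq_of_mem_replicate h]; exact hspos,
            by
              rw [Multiset.sum_add, Multiset.sum_replicate, q.parts_sum, smul_eq_mul,
                mul_comm k s]
              omega⟩ : n.Partition))
          ?_ ?_ ?_ ?_
        · intro p hp
          rw [hmemT]
          intro a ha
          exact (hmemT p).1 (Finset.mem_filter.1 hp).1 a
            (Multiset.mem_of_le (Multiset.sub_le_self _ _) ha)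
        · intro q hq
          rw [Finset.mem_filter]
          constructor
          · rw [hmemT]
            intro a ha
            rcases Multiset.mem_add.1 ha with h | h
            · exact (hmemT q).1 hq a h
            · rw [Multiset.eq_of_mem_replicate h]; exact hsS
          · simp [Multiset.count_replicate]
        · intro p hp
          have hrep : Multiset.replicate k s ≤ p.parts :=
            Multiset.le_count_iff_replicate_le.1 (Finset.mem_filter.1 hp).2
          apply Nat.Partition.ext
          simp [tsub_add_cancel_of_le hrep]
        · intro q hq
          apply Nat.Partition.ext
          simp
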